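/- arXiv:1108.4833 — 3 statements merged into one kernel-verified Lean document; each statement's English description precedes it below -/
import Mathlib

section
/- Let G be a group, r ≥ 2 and fix 1 < k < r. If two tuples (g_1,…,g_r) and (g'_1,…,g'_r) in G^r lie in the same orbit of the subgroup of permutations of G^r generated by the braid moves Q_i with i ≠ k together with all diagonal conjugations by elements of G, then the tail product g'_{k+1}⋯g'_r is conjugate in G to g_{k+1}⋯g_r. In particular the conjugacy class of the tail product (the nodal type) is an invariant of such orbits. -/
/-- The braid move `Q_i` (`0`-indexed): it replaces the entries in positions `i` and `i+1`
of a tuple `(g_0, …, g_{r-1})` by `g_{i+1}` and `g_{i+1}⁻¹ * g_i * g_{i+1}` respectively,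
leaving all other entries unchanged.  (For `i + 1 ≥ r` it is the identity.) -/
def braidMove {G : Type*} [Group G] {r : ℕ} (i : ℕ) (g : Fin r → G) : Fin r → G :=
  fun m =>
    if _hm : (m : ℕ) = i then
      if h : i + 1 < r then g ⟨i + 1, h⟩ else g m
    else if hm' : (m : ℕ) = i + 1 then
      (g m)⁻¹ * g ⟨i, by have := m.isLt; omega⟩ * g m
    else g m

private lemma conj_list_prod {G : Type*} [Group G] (h : G) :
    ∀ l : List G, (l.map fun x => h⁻¹ * x * h).prod = h⁻¹ * l.prod * h := by
  intro l
  induction l with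
  | nil => simp
  | cons a t ih =>
    simp only [List.map_cons, List.prod_cons, ih]
    group

private lemma braidMove_apply_ne {G : Type*} [Group G] {r : ℕ} (i : ℕ) (g : Fin r → G)
    (m : Fin r) (h1 : (m : ℕ) ≠ i) (h2 : (m : ℕ) ≠ i + 1) : braidMove i g m = g m := by
  simp [braidMove, h1, h2]

private lemma tail_step {G : Type*} [Group G] {r : ℕ} (k : ℕ) (hk1 : 1 < k) (hk2 : k < r)
    (a b : Fin r → G)
    (hab : (∃ i : ℕ, i + 1 < r ∧ i + 1 ≠ k ∧ b = braidMove i a) ∨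
        (∃ h : G, b = fun m => h⁻¹ * a m * h)) :
    IsConj ((List.ofFn a).drop k).prod ((List.ofFn b).drop k).prod := by
  rcases hab with ⟨i, hir, hik, rfl⟩ | ⟨h, rfl⟩
  · -- braid move case
    rcases lt_or_ge (i + 1) k with hlt | hge
    · -- both changed entries lie strictly below k
      have : (List.ofFn (braidMove i a)).drop k = (List.ofFn a).drop k := by
        apply List.ext_getElem
        · simp
        · intro n h₁ h₂
          have hn₁ : k + n < r := by
            simp [List.length_drop] at h₁; omega
          rw [List.getElem_drop, List.getElem_drop, List.getElem_ofFn, List.getElem_ofFn]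
          exact braidMove_apply_ne i a _ (by simp; omega) (by simp; omega)
      rw [this]
    · -- both changed entries lie in the tail
      have hki : k ≤ i := by omega
      have hd : ∀ (t : List G), t.length = r → t.drop k =
          (t.drop k).take (i - k) ++ t.drop i := by
        intro t ht
        conv_lhs => rw [← List.take_append_drop (i - k) (t.drop k)]
        rw [List.drop_drop]
        congr 2
        omega
      have hdi : ∀ (t : List G) (ht : t.length = r), t.drop i =
          t[i]'(by omega) :: t[i+1]'(by omega) :: t.drop (i + 2) := by
        intro t ht
        rw [List.drop_eq_getElem_cons (by omega), List.drop_eq_getElem_cons (by omega)]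
      have htake : ((List.ofFn (braidMove i a)).drop k).take (i - k)
          = ((List.ofFn a).drop k).take (i - k) := by
        apply List.ext_getElem
        · simp
        · intro n h₁ h₂
          have hn : n < i - k := by
            simp [List.length_take, List.length_drop] at h₁; omega
          rw [List.getElem_take, List.getElem_take, List.getElem_drop, List.getElem_drop,
            List.getElem_ofFn, List.getElem_ofFn]
          exact braidMove_apply_ne i a _ (by simp; omega) (by simp; omega)
      have htail : (List.ofFn (braidMove i a)).drop (i + 2) = (List.ofFn a).drop (i + 2) := by
        apply List.ext_getElem
        · simp
        · intro n h₁ h₂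
          have hn : i + 2 + n < r := by
            simp [List.length_drop] at h₁; omega
          rw [List.getElem_drop, List.getElem_drop, List.getElem_ofFn, List.getElem_ofFn]
          exact braidMove_apply_ne i a _ (by simp; omega) (by simp; omega)
      have he1 : (List.ofFn (braidMove i a))[i]'(by simp; omega) = a ⟨i + 1, hir⟩ := by
        rw [List.getElem_ofFn]
        simp [braidMove, hir]
      have he2 : (List.ofFn (braidMove i a))[i+1]'(by simp; omega)
          = (a ⟨i + 1, hir⟩)⁻¹ * a ⟨i, by omega⟩ * a ⟨i + 1, hir⟩ := by
        rw [List.getElem_ofFn]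
        simp only [braidMove]
        rw [dif_neg (by omega)]
        simp
      have hg1 : (List.ofFn a)[i]'(by simp; omega) = a ⟨i, by omega⟩ := by
        rw [List.getElem_ofFn]
      have hg2 : (List.ofFn a)[i+1]'(by simp; omega) = a ⟨i + 1, hir⟩ := by
        rw [List.getElem_ofFn]
      have key : ((List.ofFn (braidMove i a)).drop k).prod = ((List.ofFn a).drop k).prod := by
        rw [hd _ (by simp), hd (List.ofFn a) (by simp), hdi _ (by simp),
          hdi (List.ofFn a) (by simp), htake, htail, he1, he2, hg1, hg2]
        simp [List.prod_append, mul_assoc]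
      rw [key]
  · -- diagonal conjugation case
    have : (List.ofFn (fun m => h⁻¹ * a m * h)).drop k
        = ((List.ofFn a).drop k).map fun x => h⁻¹ * x * h := by
      apply List.ext_getElem
      · simp
      · intro n h₁ h₂
        rw [List.getElem_drop, List.getElem_map, List.getElem_drop, List.getElem_ofFn,
          List.getElem_ofFn]
    rw [this, conj_list_prod]
    exact isConj_iff.mpr ⟨h⁻¹, by group⟩

/-- Let `G` be a group, `r ≥ 2` and fix `1 < k < r`.  If two tuples `g, g' ∈ G^r` lie in the
same orbit of the group of permutations of `G^r` generated by the braid moves `Q_i` with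
`i ≠ k` (0-indexed: `i + 1 ≠ k`) together with all diagonal conjugations — equivalently, if
they are related by the equivalence closure of the relation "`b` is obtained from `a` by one
such braid move or one diagonal conjugation" — then the tail product `g'_{k+1} ⋯ g'_r` is
conjugate in `G` to `g_{k+1} ⋯ g_r`.  In particular, the conjugacy class of the tail product
(the nodal type) is an invariant of such orbits. -/
theorem tailProd_isConj_of_orbit {G : Type*} [Group G] {r : ℕ} (hr : 2 ≤ r)
    (k : ℕ) (hk1 : 1 < k) (hk2 : k < r) (g g' : Fin r → G)
    (horb : Relation.EqvGen
      (fun a b : Fin r → G =>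
        (∃ i : ℕ, i + 1 < r ∧ i + 1 ≠ k ∧ b = braidMove i a) ∨
        (∃ h : G, b = fun m => h⁻¹ * a m * h)) g g') :
    IsConj ((List.ofFn g).drop k).prod ((List.ofFn g').drop k).prod := by
  induction horb with
  | rel a b hab => exact tail_step k hk1 hk2 a b hab
  | refl a => exact IsConj.refl _
  | symm a b _ ih => exact ih.symm
  | trans a b c _ _ ih1 ih2 => exact ih1.trans ih2
end

section
/- Let G be a group, r ≥ 2, 1 < k < r, and (g_1,…,g_r) ∈ G^r with g_1⋯g_r = 1 and g_{k+1}⋯g_r = 1. If the subgroups H := ⟨g_1,…,g_k⟩ and T := ⟨g_{k+1},…,g_r⟩ do not centralize each other, then there exist indices s ≤ k < t such that the permutation of G^r given by the pure braid Q_{st} := Q_{t−1}⋯Q_{s+1} Q_s^2 Q_{s+1}^{−1}⋯Q_{t−1}^{−1} (acting via braid moves) takes (g_1,…,g_r) to a tuple (g'_1,…,g'_r) with g'_{k+1}⋯g'_r ≠ 1; i.e. the orbit of (g_1,…,g_r) under pure braids contains a tuple of nodal type different from {1_G}. -/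
/-- The inverse braid move `Q_i⁻¹` (0-indexed): it replaces the entries in positions `i` and
`i+1` of a tuple by `g_i * g_{i+1} * g_i⁻¹` and `g_i` respectively. -/
def braidMoveInv {G : Type*} [Group G] {r : ℕ} (i : ℕ) (g : Fin r → G) : Fin r → G :=
  fun m =>
    if _hm : (m : ℕ) = i then
      if h : i + 1 < r then g m * g ⟨i + 1, h⟩ * (g m)⁻¹ else g m
    else if hm' : (m : ℕ) = i + 1 then
      g ⟨i, by have := m.isLt; omega⟩
    else g m

/-- Apply a braid word, given as a list of pairs (generator index, `true` for the generator
and `false` for its inverse), to a tuple, leftmost letter first (a right action). -/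
def applyBraidWord {G : Type*} [Group G] {r : ℕ} (w : List (ℕ × Bool)) (g : Fin r → G) :
    Fin r → G :=
  w.foldl (fun g p => if p.2 then braidMove p.1 g else braidMoveInv p.1 g) g

/-- The pure braid word `Q_{st} = Q_{t-1} ⋯ Q_{s+1} Q_s² Q_{s+1}⁻¹ ⋯ Q_{t-1}⁻¹`
(0-indexed generators, `s < t`). -/
def pureBraidWord (s t : ℕ) : List (ℕ × Bool) :=
  ((List.range (t - 1 - s)).map fun j => (t - 1 - j, true)) ++
    [(s, true), (s, true)] ++
    ((List.range (t - 1 - s)).map fun j => (s + 1 + j, false))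

section BraidAux

variable {G : Type*} [Group G] {r : ℕ}

lemma abw_append (u v : List (ℕ × Bool)) (g : Fin r → G) :
    applyBraidWord (u ++ v) g = applyBraidWord v (applyBraidWord u g) :=
  List.foldl_append

lemma abw_cons_true (i : ℕ) (w : List (ℕ × Bool)) (g : Fin r → G) :
    applyBraidWord ((i, true) :: w) g = applyBraidWord w (braidMove i g) := rfl

lemma abw_cons_false (i : ℕ) (w : List (ℕ × Bool)) (g : Fin r → G) :
    applyBraidWord ((i, false) :: w) g = applyBraidWord w (braidMoveInv i g) := rfl

lemma abw_nil (g : Fin r → G) : applyBraidWord [] g = g := rfl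

lemma gc (g : Fin r → G) {i j : ℕ} {hi : i < r} {hj : j < r} (e : i = j) :
    g ⟨i, hi⟩ = g ⟨j, hj⟩ := by subst e; rfl

lemma gc3 (g : Fin r → G) {i1 j1 i2 j2 i3 j3 : ℕ} {hi1 : i1 < r} {hj1 : j1 < r}
    {hi2 : i2 < r} {hj2 : j2 < r} {hi3 : i3 < r} {hj3 : j3 < r}
    (e1 : i1 = j1) (e2 : i2 = j2) (e3 : i3 = j3) :
    (g ⟨i1, hi1⟩)⁻¹ * g ⟨i2, hi2⟩ * g ⟨i3, hi3⟩ = (g ⟨j1, hj1⟩)⁻¹ * g ⟨j2, hj2⟩ * g ⟨j3, hj3⟩ := by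
  subst e1; subst e2; subst e3; rfl

lemma gc3' (g : Fin r → G) {i1 j1 i2 j2 i3 j3 : ℕ} {hi1 : i1 < r} {hj1 : j1 < r}
    {hi2 : i2 < r} {hj2 : j2 < r} {hi3 : i3 < r} {hj3 : j3 < r}
    (e1 : i1 = j1) (e2 : i2 = j2) (e3 : i3 = j3) :
    g ⟨i1, hi1⟩ * g ⟨i2, hi2⟩ * (g ⟨i3, hi3⟩)⁻¹ = g ⟨j1, hj1⟩ * g ⟨j2, hj2⟩ * (g ⟨j3, hj3⟩)⁻¹ := by
  subst e1; subst e2; subst e3; rfl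

lemma desc_lemma (d : ℕ) : ∀ (s : ℕ) (g : Fin r → G) (h : s + 1 + d < r),
    applyBraidWord ((List.range d).map fun j => (s + d - j, true)) g =
      fun (m : Fin r) =>
        if (m : ℕ) ≤ s ∨ s + 1 + d < (m : ℕ) then g m
        else if (m : ℕ) = s + 1 then g ⟨s + 1 + d, h⟩
        else (g ⟨s + 1 + d, h⟩)⁻¹ * g ⟨(m : ℕ) - 1, by have := m.isLt; omega⟩ *
            g ⟨s + 1 + d, h⟩ := by
  induction d with
  | zero =>
      intro s g h
      funext m
      rw [List.range_zero, List.map_nil, abw_nil]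
      by_cases h1 : (m : ℕ) ≤ s ∨ s + 1 + 0 < (m : ℕ)
      · rw [if_pos h1]
      · rw [if_neg h1, if_pos (by omega : (m : ℕ) = s + 1)]
        congr 1
        simp only [Fin.ext_iff]; omega
  | succ d ih =>
      intro s g h
      have hw1 : ((List.range (d + 1)).map fun j => (s + (d + 1) - j, true)) =
          ((List.range d).map fun j => (s + 1 + d - j, true)) ++ [(s + 1, true)] := by
        rw [List.range_succ, List.map_append]
        congr 1
        · apply List.map_congr_left
          intro j hj
          have : s + (d + 1) - j = s + 1 + d - j := by omega
          rw [this]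
        · simp only [List.map_cons, List.map_nil, List.cons.injEq, Prod.mk.injEq, and_true]
          omega
      rw [hw1, abw_append, ih (s + 1) g (by omega), abw_cons_true, abw_nil]
      funext m
      obtain ⟨mv, hmv⟩ := m
      simp only [braidMove, Fin.val_mk]
      split_ifs <;> first
        | rfl
        | omega
        | (apply gc ; omega)
        | (apply gc3 <;> omega)

lemma asc_lemma (d : ℕ) : ∀ (s : ℕ) (g : Fin r → G) (h : s + 1 + d < r),
    applyBraidWord ((List.range d).map fun j => (s + 1 + j, false)) g =
      fun (m : Fin r) =>
        if (m : ℕ) ≤ s ∨ s + 1 + d < (m : ℕ) then g m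
        else if (m : ℕ) = s + 1 + d then g ⟨s + 1, by omega⟩
        else if hm1 : (m : ℕ) + 1 < r then
          g ⟨s + 1, by omega⟩ * g ⟨(m : ℕ) + 1, hm1⟩ * (g ⟨s + 1, by omega⟩)⁻¹
        else g m := by
  induction d with
  | zero =>
      intro s g h
      funext m
      rw [List.range_zero, List.map_nil, abw_nil]
      by_cases h1 : (m : ℕ) ≤ s ∨ s + 1 + 0 < (m : ℕ)
      · rw [if_pos h1]
      · rw [if_neg h1, if_pos (by omega : (m : ℕ) = s + 1 + 0)]
        exact gc g (by omega)
  | succ d ih =>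
      intro s g h
      have hw1 : ((List.range (d + 1)).map fun j => (s + 1 + j, false)) =
          (s + 1, false) :: ((List.range d).map fun j => (s + 1 + 1 + j, false)) := by
        rw [List.range_succ_eq_map, List.map_cons, List.map_map]
        congr 1
        apply List.map_congr_left
        intro j hj
        simp only [Function.comp_apply, Nat.succ_eq_add_one, Prod.mk.injEq, and_true]
        omega
      rw [hw1, abw_cons_false, ih (s + 1) (braidMoveInv (s + 1) g) (by omega)]
      funext m
      obtain ⟨mv, hmv⟩ := m
      simp only [braidMoveInv, Fin.val_mk]
      split_ifs <;> first
        | rfl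
        | omega
        | (apply gc ; omega)
        | (apply gc3 <;> omega)
        | (apply gc3' <;> omega)


lemma gc5 (g : Fin r → G) {i1 i2 i3 i4 i5 j1 j2 j3 j4 j5 : ℕ}
    {h1 : i1 < r} {h2 : i2 < r} {h3 : i3 < r} {h4 : i4 < r} {h5 : i5 < r}
    {k1 : j1 < r} {k2 : j2 < r} {k3 : j3 < r} {k4 : j4 < r} {k5 : j5 < r}
    (e1 : i1 = j1) (e2 : i2 = j2) (e3 : i3 = j3) (e4 : i4 = j4) (e5 : i5 = j5) :
    (g ⟨i1, h1⟩)⁻¹ * (g ⟨i2, h2⟩)⁻¹ * g ⟨i3, h3⟩ * g ⟨i4, h4⟩ * g ⟨i5, h5⟩ =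
    (g ⟨j1, k1⟩)⁻¹ * (g ⟨j2, k2⟩)⁻¹ * g ⟨j3, k3⟩ * g ⟨j4, k4⟩ * g ⟨j5, k5⟩ := by
  subst e1; subst e2; subst e3; subst e4; subst e5; rfl

lemma gkeyA (g : Fin r → G) {a b u : ℕ} {ha : a < r} {hb : b < r} {hu : u < r}
    (e : u = a) :
    ((g ⟨a, ha⟩)⁻¹ * g ⟨b, hb⟩ * g ⟨a, ha⟩)⁻¹ * g ⟨u, hu⟩ *
      ((g ⟨a, ha⟩)⁻¹ * g ⟨b, hb⟩ * g ⟨a, ha⟩) =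
    (g ⟨a, ha⟩)⁻¹ * (g ⟨b, hb⟩)⁻¹ * g ⟨a, ha⟩ * g ⟨b, hb⟩ * g ⟨a, ha⟩ := by
  subst e; group

lemma gkey5 (g : Fin r → G) {a b u v : ℕ} {ha : a < r} {hb : b < r} {hu : u < r} {hv : v < r}
    (e : u = v) :
    ((g ⟨a, ha⟩)⁻¹ * (g ⟨b, hb⟩)⁻¹ * g ⟨a, ha⟩ * g ⟨b, hb⟩ * g ⟨a, ha⟩) *
      ((g ⟨a, ha⟩)⁻¹ * g ⟨u, hu⟩ * g ⟨a, ha⟩) *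
      ((g ⟨a, ha⟩)⁻¹ * (g ⟨b, hb⟩)⁻¹ * g ⟨a, ha⟩ * g ⟨b, hb⟩ * g ⟨a, ha⟩)⁻¹ =
    ((g ⟨a, ha⟩)⁻¹ * (g ⟨b, hb⟩)⁻¹ * g ⟨a, ha⟩ * g ⟨b, hb⟩) * g ⟨v, hv⟩ *
      ((g ⟨a, ha⟩)⁻¹ * (g ⟨b, hb⟩)⁻¹ * g ⟨a, ha⟩ * g ⟨b, hb⟩)⁻¹ := by
  subst e; group

set_option maxHeartbeats 2000000 in
lemma pure_braid_formula (s t : ℕ) (hst : s < t) (ht : t < r) (g : Fin r → G) :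
    applyBraidWord (pureBraidWord s t) g =
      fun (m : Fin r) =>
        if (m : ℕ) < s ∨ t < (m : ℕ) then g m
        else if (m : ℕ) = s then (g ⟨t, ht⟩)⁻¹ * g m * g ⟨t, ht⟩
        else if (m : ℕ) = t then
          ((g ⟨t, ht⟩)⁻¹ * (g ⟨s, by omega⟩)⁻¹ * g ⟨t, ht⟩ * g ⟨s, by omega⟩) * g m
        else ((g ⟨t, ht⟩)⁻¹ * (g ⟨s, by omega⟩)⁻¹ * g ⟨t, ht⟩ * g ⟨s, by omega⟩) * g m *
            ((g ⟨t, ht⟩)⁻¹ * (g ⟨s, by omega⟩)⁻¹ * g ⟨t, ht⟩ * g ⟨s, by omega⟩)⁻¹ := by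
  obtain ⟨d, rfl⟩ : ∃ d, t = s + 1 + d := ⟨t - 1 - s, by omega⟩
  have hs : s < r := by omega
  unfold pureBraidWord
  have e1 : s + 1 + d - 1 - s = d := by omega
  have e2 : ∀ j, s + 1 + d - 1 - j = s + d - j := by intro j; omega
  simp only [e1, e2]
  rw [abw_append, abw_append, desc_lemma d s g ht, abw_cons_true, abw_cons_true, abw_nil]
  have hmid : braidMove s (braidMove s
      (fun (m : Fin r) =>
        if (m : ℕ) ≤ s ∨ s + 1 + d < (m : ℕ) then g m
        else if (m : ℕ) = s + 1 then g ⟨s + 1 + d, ht⟩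
        else (g ⟨s + 1 + d, ht⟩)⁻¹ * g ⟨(m : ℕ) - 1, by have := m.isLt; omega⟩ *
            g ⟨s + 1 + d, ht⟩)) =
      fun (m : Fin r) =>
        if (m : ℕ) < s ∨ s + 1 + d < (m : ℕ) then g m
        else if (m : ℕ) = s then (g ⟨s + 1 + d, ht⟩)⁻¹ * g ⟨s, hs⟩ * g ⟨s + 1 + d, ht⟩
        else if (m : ℕ) = s + 1 then
          (g ⟨s + 1 + d, ht⟩)⁻¹ * (g ⟨s, hs⟩)⁻¹ * g ⟨s + 1 + d, ht⟩ * g ⟨s, hs⟩ *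
            g ⟨s + 1 + d, ht⟩
        else (g ⟨s + 1 + d, ht⟩)⁻¹ * g ⟨(m : ℕ) - 1, by have := m.isLt; omega⟩ *
            g ⟨s + 1 + d, ht⟩ := by
    funext m
    obtain ⟨mv, hmv⟩ := m
    simp only [braidMove, Fin.val_mk]
    split_ifs <;> first
      | rfl
      | omega
      | (apply gc ; omega)
      | (apply gc3 <;> omega)
      | (apply gkeyA ; omega)
  rw [hmid, asc_lemma d s _ ht]
  funext m
  obtain ⟨mv, hmv⟩ := m
  simp only [Fin.val_mk]
  split_ifs <;> first
    | rfl
    | omega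
    | (apply gc ; omega)
    | (apply gc3 <;> omega)
    | (apply gc5 <;> omega)
    | (apply gkey5 ; omega)

lemma drop_prod_congr (a b : Fin r → G) :
    ∀ (n j : ℕ), j + n = r → (∀ m : Fin r, j ≤ (m : ℕ) → b m = a m) →
      ((List.ofFn b).drop j).prod = ((List.ofFn a).drop j).prod := by
  intro n
  induction n with
  | zero =>
      intro j hj _
      rw [List.drop_eq_nil_of_le (by rw [List.length_ofFn]; omega),
        List.drop_eq_nil_of_le (by rw [List.length_ofFn]; omega)]
  | succ n ih =>
      intro j hj hab
      have hjr : j < r := by omega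
      have hb : j < (List.ofFn b).length := by rw [List.length_ofFn]; exact hjr
      have ha : j < (List.ofFn a).length := by rw [List.length_ofFn]; exact hjr
      rw [List.drop_eq_getElem_cons hb, List.drop_eq_getElem_cons ha,
        List.prod_cons, List.prod_cons, List.getElem_ofFn, List.getElem_ofFn,
        ih (j + 1) (by omega) (fun m hm => hab m (by omega)),
        hab ⟨j, by simpa using hjr⟩ (by simp)]

lemma drop_prod_main (a b : Fin r → G) (w : G) (t : ℕ) (htr : t < r)
    (h2 : b ⟨t, htr⟩ = w * a ⟨t, htr⟩)
    (h3 : ∀ m : Fin r, t < (m : ℕ) → b m = a m) :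
    ∀ (n j : ℕ), j + n = t → (∀ m : Fin r, j ≤ (m : ℕ) → (m : ℕ) < t → b m = w * a m * w⁻¹) →
      ((List.ofFn b).drop j).prod = w * ((List.ofFn a).drop j).prod := by
  intro n
  induction n with
  | zero =>
      intro j hj _
      have hjt : j = t := by omega
      have hjr : j < r := by omega
      have hb : j < (List.ofFn b).length := by rw [List.length_ofFn]; exact hjr
      have ha : j < (List.ofFn a).length := by rw [List.length_ofFn]; exact hjr
      rw [List.drop_eq_getElem_cons hb, List.drop_eq_getElem_cons ha,
        List.prod_cons, List.prod_cons, List.getElem_ofFn, List.getElem_ofFn,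
        drop_prod_congr a b (r - (j + 1)) (j + 1) (by omega)
          (fun m hm => h3 m (by omega))]
      have hmk : (⟨j, by simpa using hjr⟩ : Fin r) = ⟨t, htr⟩ := by
        simp only [Fin.ext_iff]; omega
      rw [hmk, h2, mul_assoc]
  | succ n ih =>
      intro j hj h1
      have hjr : j < r := by omega
      have hb : j < (List.ofFn b).length := by rw [List.length_ofFn]; exact hjr
      have ha : j < (List.ofFn a).length := by rw [List.length_ofFn]; exact hjr
      rw [List.drop_eq_getElem_cons hb, List.drop_eq_getElem_cons ha,
        List.prod_cons, List.prod_cons, List.getElem_ofFn, List.getElem_ofFn,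
        ih (j + 1) (by omega) (fun m hm hm2 => h1 m (by omega) hm2),
        h1 ⟨j, by simpa using hjr⟩ (by simp) (by simp only [Fin.val_mk]; omega)]
      group

end BraidAux

/-- Let `G` be a group, `r ≥ 2`, `1 < k < r`, and `g ∈ G^r` a tuple with total product `1`
and tail product `1` (nodal type `{1}`).  If the subgroups `H` generated by the head entries
and `T` generated by the tail entries do not centralize each other, then there exist indices
`s ≤ k < t` (0-indexed: `s < k ≤ t < r`) such that the pure braid `Q_{st}` takes `g` to a
tuple whose tail product is not `1`, i.e. of nodal type different from `{1_G}`. -/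
theorem pureBraid_changes_trivial_nodal_type {G : Type*} [Group G] {r : ℕ} (hr : 2 ≤ r)
    (k : ℕ) (hk1 : 1 < k) (hk2 : k < r) (g : Fin r → G)
    (hprod : (List.ofFn g).prod = 1)
    (htail : ((List.ofFn g).drop k).prod = 1)
    (hnc : ¬ ∀ x ∈ Subgroup.closure {x : G | ∃ m : Fin r, (m : ℕ) < k ∧ x = g m},
        ∀ y ∈ Subgroup.closure {y : G | ∃ m : Fin r, k ≤ (m : ℕ) ∧ y = g m}, Commute x y) :
    ∃ s t : ℕ, s < k ∧ k ≤ t ∧ t < r ∧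
      ((List.ofFn (applyBraidWord (pureBraidWord s t) g)).drop k).prod ≠ 1 := by
  classical
  -- Step 1: extract a non-commuting pair of generators
  have hex : ∃ a b : Fin r, (a : ℕ) < k ∧ k ≤ (b : ℕ) ∧ ¬ Commute (g a) (g b) := by
    by_contra hno
    push_neg at hno
    apply hnc
    have base : ∀ (n : Fin r), k ≤ (n : ℕ) →
        ∀ x ∈ Subgroup.closure {x : G | ∃ m : Fin r, (m : ℕ) < k ∧ x = g m},
          Commute x (g n) := by
      intro n hn x hx
      induction hx using Subgroup.closure_induction with
      | mem z hz =>
          obtain ⟨m, hm, rfl⟩ := hz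
          exact hno m n hm hn
      | one => exact Commute.one_left _
      | mul u v hu hv ihu ihv => exact ihu.mul_left ihv
      | inv u hu ihu => exact ihu.inv_left
    intro x hx y hy
    induction hy using Subgroup.closure_induction with
    | mem z hz =>
        obtain ⟨n, hn, rfl⟩ := hz
        exact base n hn x hx
    | one => exact Commute.one_right x
    | mul u v hu hv ihu ihv => exact ihu.mul_right ihv
    | inv u hu ihu => exact ihu.inv_right
  obtain ⟨a, b, hak, hkb, hcnot⟩ := hex
  have hst : (a : ℕ) < (b : ℕ) := by omega
  have hbr : (b : ℕ) < r := b.isLt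
  have har : (a : ℕ) < r := a.isLt
  refine ⟨(a : ℕ), (b : ℕ), hak, hkb, hbr, ?_⟩
  rw [pure_braid_formula (a : ℕ) (b : ℕ) hst hbr g]
  set W : G := (g ⟨(b : ℕ), hbr⟩)⁻¹ * (g ⟨(a : ℕ), by omega⟩)⁻¹ * g ⟨(b : ℕ), hbr⟩ *
      g ⟨(a : ℕ), by omega⟩ with hW
  have hprodW : ((List.ofFn (fun (m : Fin r) =>
      if (m : ℕ) < (a : ℕ) ∨ (b : ℕ) < (m : ℕ) then g m
      else if (m : ℕ) = (a : ℕ) then (g ⟨(b : ℕ), hbr⟩)⁻¹ * g m * g ⟨(b : ℕ), hbr⟩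
      else if (m : ℕ) = (b : ℕ) then W * g m
      else W * g m * W⁻¹)).drop k).prod = W * ((List.ofFn g).drop k).prod := by
    refine drop_prod_main g _ W (b : ℕ) hbr ?_ ?_ ((b : ℕ) - k) k (by omega) ?_
    · -- h2
      simp only [Fin.val_mk]
      rw [if_neg (by omega), if_neg (by omega), if_pos trivial]
    · -- h3
      intro m hm
      rw [if_pos (by omega)]
    · -- h1
      intro m hm1 hm2
      rw [if_neg (by omega), if_neg (by omega), if_neg (by omega)]
  rw [hprodW, htail, mul_one]
  -- W ≠ 1
  intro hW1
  apply hcnot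
  have hea : (⟨(a : ℕ), by omega⟩ : Fin r) = a := Fin.eta a har
  have heb : (⟨(b : ℕ), hbr⟩ : Fin r) = b := Fin.eta b hbr
  rw [hW, hea, heb] at hW1
  have h2 : (g a)⁻¹ * g b * g a = g b := by
    have h3 := congrArg (fun z => g b * z) hW1
    simpa [mul_assoc] using h3
  have h4 := congrArg (fun z => g a * z) h2
  exact (show g a * g b = g b * g a by simpa [mul_assoc] using h4.symm)
end

section
/- Let π : B_r → S_r be the canonical surjection from the Artin braid group to the symmetric group sending Q_i to the transposition (i, i+1). Then the kernel of π (the pure braid group B^{(r)}) is generated by the elements Q_{ij} := Q_{j−1}⋯Q_{i+1} Q_i^2 Q_{i+1}^{−1}⋯Q_{j−1}^{−1} for 1 ≤ i < j ≤ r. -/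
/-- The braid relations on `n` generators `Q_0, …, Q_{n-1}`. -/
def braidRels (n : ℕ) : Set (FreeGroup (Fin n)) :=
  {w | (∃ i j : Fin n, (i : ℕ) + 1 = (j : ℕ) ∧
          w = FreeGroup.of i * FreeGroup.of j * FreeGroup.of i *
              (FreeGroup.of j * FreeGroup.of i * FreeGroup.of j)⁻¹) ∨
       (∃ i j : Fin n, (i : ℕ) + 2 ≤ (j : ℕ) ∧
          w = FreeGroup.of i * FreeGroup.of j * (FreeGroup.of j * FreeGroup.of i)⁻¹)}

/-- The Artin braid group on `r` strings, presented by `r - 1` generators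
subject to the braid relations. -/
abbrev BraidGroup (r : ℕ) : Type := PresentedGroup (braidRels (r - 1))

/-- The `i`-th generator `Q_i` (0-indexed, `i < r - 1`) of the braid group `B_r`
(junk value `1` out of range). -/
def braidGen (r : ℕ) (i : ℕ) : BraidGroup r :=
  if h : i < r - 1 then PresentedGroup.of ⟨i, h⟩ else 1

/-- The pure braid `Q_{ij} = Q_{j-1} ⋯ Q_{i+1} Q_i² Q_{i+1}⁻¹ ⋯ Q_{j-1}⁻¹ ∈ B_r`
(0-indexed: `i < j ≤ r - 1`). -/
def braidQ (r : ℕ) (i j : ℕ) : BraidGroup r :=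
  ((List.range (j - 1 - i)).map fun m => braidGen r (j - 1 - m)).prod *
    braidGen r i * braidGen r i *
    (((List.range (j - 1 - i)).map fun m => braidGen r (j - 1 - m)).prod)⁻¹

namespace PureBraidProof

lemma rel_one {α : Type*} (rels : Set (FreeGroup α)) {w : FreeGroup α} (h : w ∈ rels) :
    PresentedGroup.mk rels w = 1 :=
  (QuotientGroup.eq_one_iff w).2 (Subgroup.subset_normalClosure h)

variable {r : ℕ}

lemma braidGen_of_le (k : ℕ) (h : r - 1 ≤ k) : braidGen r k = 1 := by
  rw [braidGen, dif_neg (by omega)]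

lemma braid_rel (k : ℕ) (h : k + 2 ≤ r - 1) :
    braidGen r k * braidGen r (k + 1) * braidGen r k =
      braidGen r (k + 1) * braidGen r k * braidGen r (k + 1) := by
  have h1 : k < r - 1 := by omega
  have h2 : k + 1 < r - 1 := by omega
  have hrel := rel_one (braidRels (r - 1))
    (w := FreeGroup.of ⟨k, h1⟩ * FreeGroup.of ⟨k + 1, h2⟩ * FreeGroup.of ⟨k, h1⟩ *
      (FreeGroup.of ⟨k + 1, h2⟩ * FreeGroup.of ⟨k, h1⟩ * FreeGroup.of ⟨k + 1, h2⟩)⁻¹)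
    (Or.inl ⟨⟨k, h1⟩, ⟨k + 1, h2⟩, rfl, rfl⟩)
  rw [braidGen, braidGen, dif_pos h1, dif_pos h2]
  simp only [map_mul, map_inv] at hrel
  have := mul_inv_eq_one.mp hrel
  exact this

lemma braid_comm (k m : ℕ) (h : k + 2 ≤ m) :
    Commute (braidGen r k) (braidGen r m) := by
  by_cases hm : m < r - 1
  · have h1 : k < r - 1 := by omega
    have hrel := rel_one (braidRels (r - 1))
      (w := FreeGroup.of ⟨k, h1⟩ * FreeGroup.of ⟨m, hm⟩ *
        (FreeGroup.of ⟨m, hm⟩ * FreeGroup.of ⟨k, h1⟩)⁻¹)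
      (Or.inr ⟨⟨k, h1⟩, ⟨m, hm⟩, h, rfl⟩)
    rw [braidGen, braidGen, dif_pos h1, dif_pos hm]
    simp only [map_mul, map_inv] at hrel
    exact mul_inv_eq_one.mp hrel
  · rw [braidGen_of_le m (by omega)]
    exact Commute.one_right _

/-- descending product `Q_{b-1} Q_{b-2} ⋯ Q_a` (= 1 if `b ≤ a`). -/
def dd (r a b : ℕ) : BraidGroup r :=
  ((List.range (b - a)).map fun m => braidGen r (b - 1 - m)).prod

lemma braidQ_eq (i j : ℕ) :
    braidQ r i j = dd r (i + 1) j * braidGen r i * braidGen r i * (dd r (i + 1) j)⁻¹ := by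
  unfold braidQ dd
  rw [show j - 1 - i = j - (i + 1) by omega]

lemma dd_of_le {a b : ℕ} (h : b ≤ a) : dd r a b = 1 := by
  unfold dd
  rw [show b - a = 0 by omega]
  simp

lemma dd_cons {a b : ℕ} (h : a < b) :
    dd r a b = braidGen r (b - 1) * dd r a (b - 1) := by
  unfold dd
  rw [show b - a = (b - 1 - a) + 1 by omega, List.range_succ_eq_map]
  simp only [List.map_cons, List.map_map, List.prod_cons, Nat.sub_zero]
  congr 1
  congr 1
  apply List.map_congr_left
  intro m _
  simp only [Function.comp_apply]
  congr 1
  omega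


lemma dd_snoc {a b : ℕ} (h : a < b) :
    dd r a b = dd r (a + 1) b * braidGen r a := by
  unfold dd
  rw [show b - a = (b - (a + 1)) + 1 by omega, List.range_succ]
  rw [List.map_append, List.prod_append]
  simp only [List.map_cons, List.map_nil, List.prod_cons, List.prod_nil, mul_one]
  congr 2
  omega

lemma dd_comm_lo {a b k : ℕ} (h : k + 2 ≤ a) : Commute (braidGen r k) (dd r a b) := by
  apply Commute.list_prod_right
  intro x hx
  obtain ⟨m, hm, rfl⟩ := List.mem_map.mp hx
  have hm' := List.mem_range.mp hm
  exact braid_comm (r := r) k (b - 1 - m) (by omega)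

lemma dd_comm_hi' {a b k : ℕ} (h : b + 1 ≤ k) : Commute (braidGen r k) (dd r a b) := by
  apply Commute.list_prod_right
  intro x hx
  obtain ⟨m, hm, rfl⟩ := List.mem_map.mp hx
  have hm' := List.mem_range.mp hm
  exact (braid_comm (r := r) (b - 1 - m) k (by omega)).symm

lemma dd_shift : ∀ n b a k, b - a ≤ n → a ≤ k → k + 2 ≤ b → b ≤ r - 1 →
    braidGen r k * dd r a b = dd r a b * braidGen r (k + 1) := by
  intro n
  induction n with
  | zero => intro b a k h1 h2 h3 _; omega
  | succ n ih =>
    intro b a k h1 h2 h3 hb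
    by_cases hk : k + 2 ≤ b - 1
    · rw [dd_cons (show a < b by omega)]
      have hc : Commute (braidGen r k) (braidGen r (b - 1)) := braid_comm k (b - 1) (by omega)
      calc braidGen r k * (braidGen r (b - 1) * dd r a (b - 1))
          = braidGen r (b - 1) * (braidGen r k * dd r a (b - 1)) := by
            rw [← mul_assoc, hc.eq, mul_assoc]
        _ = braidGen r (b - 1) * (dd r a (b - 1) * braidGen r (k + 1)) := by
            rw [ih (b - 1) a k (by omega) h2 hk (by omega)]
        _ = braidGen r (b - 1) * dd r a (b - 1) * braidGen r (k + 1) := by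
            rw [mul_assoc]
    · -- k = b - 2
      have hk2 : k = b - 2 := by omega
      rw [dd_cons (show a < b by omega), dd_cons (show a < b - 1 by omega)]
      have hbr : braidGen r (b - 2) * braidGen r (b - 1) * braidGen r (b - 2) =
          braidGen r (b - 1) * braidGen r (b - 2) * braidGen r (b - 1) := by
        have := braid_rel (r := r) (b - 2) (by omega)
        rw [show b - 2 + 1 = b - 1 by omega] at this
        exact this
      have hc : Commute (braidGen r (b - 1)) (dd r a (b - 1 - 1)) :=
        dd_comm_hi' (by omega)
      rw [show b - 1 - 1 = b - 2 by omega] at hc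
      subst hk2
      rw [show b - 2 + 1 = b - 1 by omega, show b - 1 - 1 = b - 2 by omega]
      calc braidGen r (b - 2) * (braidGen r (b - 1) * (braidGen r (b - 2) * dd r a (b - 2)))
          = (braidGen r (b - 2) * braidGen r (b - 1) * braidGen r (b - 2)) * dd r a (b - 2) := by
            group
        _ = (braidGen r (b - 1) * braidGen r (b - 2) * braidGen r (b - 1)) * dd r a (b - 2) := by
            rw [hbr]
        _ = braidGen r (b - 1) * braidGen r (b - 2) * (braidGen r (b - 1) * dd r a (b - 2)) := by
            group
        _ = braidGen r (b - 1) * braidGen r (b - 2) * (dd r a (b - 2) * braidGen r (b - 1)) := by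
            rw [hc.eq]
        _ = braidGen r (b - 1) * (braidGen r (b - 2) * dd r a (b - 2)) * braidGen r (b - 1) := by
            group


section CoreIdentities

variable {G : Type*} [Group G]

lemma conj_eq_of_commute {g a : G} (h : Commute g a) : g * a * g⁻¹ = a := by
  rw [h.eq]; exact mul_inv_cancel_right a g

lemma comm_conj {x d u : G} (hc : x * d = d * x) :
    d * (x * u * x⁻¹) * d⁻¹ = x * (d * u * d⁻¹) * x⁻¹ := by
  calc d * (x * u * x⁻¹) * d⁻¹ = (d * x) * u * (d * x)⁻¹ := by group
    _ = (x * d) * u * (x * d)⁻¹ := by rw [hc]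
    _ = x * (d * u * d⁻¹) * x⁻¹ := by group

lemma shift_conj {x y d u : G} (h : x * d = d * y) :
    x * (d * u * d⁻¹) * x⁻¹ = d * (y * u * y⁻¹) * d⁻¹ := by
  have hx : x = d * y * d⁻¹ := by rw [← h]; group
  rw [hx]; group

lemma braid_core {a b : G} (h : a * b * a = b * a * b) :
    a * b * (a * a) * b⁻¹ * a⁻¹ = b * b := by
  have h' : a⁻¹ * b⁻¹ * a⁻¹ = b⁻¹ * a⁻¹ * b⁻¹ := by
    have := congrArg (·⁻¹) h
    simpa [mul_inv_rev, mul_assoc] using this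
  have hinv : a * b⁻¹ * a⁻¹ = b⁻¹ * a⁻¹ * b := by
    calc a * b⁻¹ * a⁻¹ = a * (b⁻¹ * a⁻¹ * b⁻¹) * b := by group
      _ = a * (a⁻¹ * b⁻¹ * a⁻¹) * b := by rw [h']
      _ = b⁻¹ * a⁻¹ * b := by group
  calc a * b * (a * a) * b⁻¹ * a⁻¹ = (a * b * a) * (a * b⁻¹ * a⁻¹) := by group
    _ = (b * a * b) * (b⁻¹ * a⁻¹ * b) := by rw [h, hinv]
    _ = b * b := by group

lemma braid_core' {a b : G} (h : a * b * a = b * a * b) :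
    a * (b * b) * a⁻¹ = (a * a) * (b * (a * a) * b⁻¹) * (a * a)⁻¹ := by
  rw [← braid_core h]; group

end CoreIdentities

/-- the generating set of the pure braid group -/
def Sset (r : ℕ) : Set (BraidGroup r) := {w | ∃ i j : ℕ, i < j ∧ j < r ∧ w = braidQ r i j}

lemma braidQ_succ (k : ℕ) : braidQ r k (k + 1) = braidGen r k * braidGen r k := by
  rw [braidQ_eq, dd_of_le (le_refl (k+1))]
  group

lemma sq_mem (k : ℕ) (hk1 : k + 1 < r) :
    braidGen r k * braidGen r k ∈ Subgroup.closure (Sset r) :=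
  Subgroup.subset_closure ⟨k, k + 1, Nat.lt_succ_self k, hk1, (braidQ_succ k).symm⟩

theorem conj_mem (k i j : ℕ) (hij : i < j) (hj : j < r) :
    braidGen r k * braidQ r i j * (braidGen r k)⁻¹ ∈ Subgroup.closure (Sset r) := by
  have hmem : braidQ r i j ∈ Subgroup.closure (Sset r) :=
    Subgroup.subset_closure ⟨i, j, hij, hj, rfl⟩
  by_cases hk : r - 1 ≤ k
  · rw [braidGen_of_le k hk]
    simpa using hmem
  push_neg at hk
  rcases Nat.lt_or_ge (k + 2) (i + 1) with hA | h1
  · -- Case A : k + 2 ≤ i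
    have hc : Commute (braidGen r k) (braidQ r i j) := by
      rw [braidQ_eq]
      exact (((dd_comm_lo (by omega)).mul_right (braid_comm k i (by omega))).mul_right
        (braid_comm k i (by omega))).mul_right (dd_comm_lo (by omega)).inv_right
    rw [conj_eq_of_commute hc]; exact hmem
  rcases Nat.lt_or_ge j k with hB | h2
  · -- Case B : j + 1 ≤ k
    have hc : Commute (braidGen r k) (braidQ r i j) := by
      rw [braidQ_eq]
      exact (((dd_comm_hi' (by omega)).mul_right
        ((braid_comm i k (by omega)).symm)).mul_right
        ((braid_comm i k (by omega)).symm)).mul_right (dd_comm_hi' (by omega)).inv_right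
    rw [conj_eq_of_commute hc]; exact hmem
  -- now i - 1 ≤ k ≤ j
  rcases Nat.eq_or_lt_of_le h2 with hC | h2'
  · -- Case C : k = j, result is braidQ r i (j+1)
    subst hC
    have hdd : dd r (i + 1) (k + 1) = braidGen r k * dd r (i + 1) k := by
      rw [dd_cons (by omega), Nat.add_sub_cancel]
    have : braidGen r k * braidQ r i k * (braidGen r k)⁻¹ = braidQ r i (k + 1) := by
      rw [braidQ_eq, braidQ_eq, hdd]
      group
    rw [this]
    exact Subgroup.subset_closure ⟨i, k + 1, by omega, by omega, rfl⟩
  -- now i - 1 ≤ k ≤ j - 1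
  rcases Nat.lt_or_ge k i with hD | h3
  · -- Case D : k = i - 1
    have hki : k + 1 = i := by omega
    set a := braidGen r k with ha
    set b := braidGen r i with hb
    set d := dd r (i + 1) j with hd
    have hcd : Commute a d := dd_comm_lo (by omega)
    have hbr : a * b * a = b * a * b := by
      have := braid_rel (r := r) k (by omega)
      rwa [hki] at this
    have hq1 : braidQ r i j = d * (b * b) * d⁻¹ := by rw [braidQ_eq, ← hd, ← hb]; group
    have key : a * braidQ r i j * a⁻¹ =
        braidQ r k i * braidQ r k j * (braidQ r k i)⁻¹ := by
      rw [hq1, braidQ_eq, braidQ_eq, dd_of_le (by omega : i ≤ k + 1)]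
      have hdkj : dd r (k + 1) j = d * b := by
        rw [hki, dd_snoc (by omega : i < j), hd, hb]
      rw [hdkj]
      calc a * (d * (b * b) * d⁻¹) * a⁻¹
          = d * (a * (b * b) * a⁻¹) * d⁻¹ := (comm_conj hcd.eq).symm
        _ = d * ((a * a) * (b * (a * a) * b⁻¹) * (a * a)⁻¹) * d⁻¹ := by
            rw [braid_core' hbr]
        _ = (a * a) * (d * (b * (a * a) * b⁻¹) * d⁻¹) * (a * a)⁻¹ := by
            exact comm_conj (by rw [mul_assoc, hcd.eq, ← mul_assoc, hcd.eq, mul_assoc])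
        _ = 1 * a * a * 1⁻¹ * (d * b * a * a * (d * b)⁻¹) * (1 * a * a * 1⁻¹)⁻¹ := by
            group
    rw [key]
    refine Subgroup.mul_mem _ (Subgroup.mul_mem _ ?_ ?_) (Subgroup.inv_mem _ ?_)
    · exact Subgroup.subset_closure ⟨k, i, by omega, by omega, rfl⟩
    · exact Subgroup.subset_closure ⟨k, j, by omega, by omega, rfl⟩
    · exact Subgroup.subset_closure ⟨k, i, by omega, by omega, rfl⟩
  rcases Nat.eq_or_lt_of_le h3 with hE | h4
  · -- k = i
    subst hE
    rcases Nat.eq_or_lt_of_le hij with hE1 | hF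
    · -- Case E : j = i + 1  (recall k = i)
      rw [← hE1, braidQ_succ]
      have : braidGen r i * (braidGen r i * braidGen r i) * (braidGen r i)⁻¹ =
          braidGen r i * braidGen r i := by group
      rw [this]
      exact sq_mem i (by omega)
    · -- Case F : k = i, i + 2 ≤ j : result braidQ r (i+1) j
      set a := braidGen r i with ha
      set b := braidGen r (i + 1) with hb
      set e := dd r (i + 2) j with he
      have hce : Commute a e := dd_comm_lo (by omega)
      have hbr : a * b * a = b * a * b := braid_rel (r := r) i (by omega)
      have hdd : dd r (i + 1) j = e * b := by
        rw [dd_snoc (by omega : i + 1 < j), he, hb]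
      have key : a * braidQ r i j * a⁻¹ = braidQ r (i + 1) j := by
        have h1' : braidQ r i j = e * (b * (a * a) * b⁻¹) * e⁻¹ := by
          rw [braidQ_eq, hdd, ← ha]; group
        have h2' : braidQ r (i + 1) j = e * (b * b) * e⁻¹ := by
          rw [braidQ_eq]
          rw [show i + 1 + 1 = i + 2 by omega, ← he, ← hb]
          group
        rw [h1', h2']
        calc a * (e * (b * (a * a) * b⁻¹) * e⁻¹) * a⁻¹
            = e * (a * (b * (a * a) * b⁻¹) * a⁻¹) * e⁻¹ := (comm_conj hce.eq).symm
          _ = e * (b * b) * e⁻¹ := by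
              rw [show a * (b * (a * a) * b⁻¹) * a⁻¹ = a * b * (a * a) * b⁻¹ * a⁻¹ by group,
                braid_core hbr]
      rw [key]
      exact Subgroup.subset_closure ⟨i + 1, j, by omega, by omega, rfl⟩
  · -- Case G : i + 1 ≤ k ≤ j - 1; here also k ≤ j - 1 and k ≠ j covered; need k ≤ j - 2?
    -- we have h4 : i < k, h2' : k < j
    rcases Nat.eq_or_lt_of_le (Nat.succ_le_of_lt h2') with hG1 | hG2
    · -- k + 1 = j : Case 4 : k = j - 1 > i
      have hkj : k + 1 = j := hG1
      have hdd : dd r (i + 1) j = braidGen r k * dd r (i + 1) k := by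
        rw [dd_cons (by omega : i + 1 < j), show j - 1 = k by omega]
      have key : braidGen r k * braidQ r i j * (braidGen r k)⁻¹ =
          braidQ r k j * braidQ r i k * (braidQ r k j)⁻¹ := by
        rw [braidQ_eq, braidQ_eq (i := i) (j := k), braidQ_eq (i := k) (j := j), hdd,
          dd_of_le (by omega : j ≤ k + 1)]
        group
      rw [key]
      refine Subgroup.mul_mem _ (Subgroup.mul_mem _ ?_ ?_) (Subgroup.inv_mem _ ?_)
      · exact Subgroup.subset_closure ⟨k, j, by omega, by omega, rfl⟩
      · exact Subgroup.subset_closure ⟨i, k, by omega, by omega, rfl⟩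
      · exact Subgroup.subset_closure ⟨k, j, by omega, by omega, rfl⟩
    · -- i + 1 ≤ k ≤ j - 2 : conj invariant
      have hsh : braidGen r k * dd r (i + 1) j = dd r (i + 1) j * braidGen r (k + 1) :=
        dd_shift (j - (i + 1)) j (i + 1) k (le_refl _) (by omega) (by omega) (by omega)
      have hc : Commute (braidGen r (k + 1)) (braidGen r i) :=
        (braid_comm i (k + 1) (by omega)).symm
      have key : braidGen r k * braidQ r i j * (braidGen r k)⁻¹ = braidQ r i j := by
        have h1 : braidQ r i j = dd r (i + 1) j * (braidGen r i * braidGen r i) *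
            (dd r (i + 1) j)⁻¹ := by rw [braidQ_eq]; group
        rw [h1, shift_conj hsh, conj_eq_of_commute (hc.mul_right hc)]
      rw [key]
      exact hmem


variable (r) in
/-- the subgroup generated by the pure braid generators -/
def HH : Subgroup (BraidGroup r) := Subgroup.closure (Sset r)

lemma conj_mem' (k : ℕ) {h : BraidGroup r} (hh : h ∈ HH r) :
    braidGen r k * h * (braidGen r k)⁻¹ ∈ HH r := by
  have hle : (HH r).map ((MulAut.conj (braidGen r k)).toMonoidHom) ≤ HH r := by
    rw [HH, MonoidHom.map_closure]
    refine (Subgroup.closure_le _).mpr ?_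
    rintro x ⟨w, ⟨i, j, hij, hj, rfl⟩, rfl⟩
    simpa using conj_mem k i j hij hj
  exact hle ⟨h, hh, by simp⟩

lemma conj_inv_mem (k : ℕ) {h : BraidGroup r} (hh : h ∈ HH r) :
    (braidGen r k)⁻¹ * h * braidGen r k ∈ HH r := by
  by_cases hk1 : k + 1 < r
  · have h2 := conj_mem' k hh
    have hsq : braidGen r k * braidGen r k ∈ HH r := sq_mem k hk1
    have heq : (braidGen r k)⁻¹ * h * braidGen r k =
        (braidGen r k * braidGen r k)⁻¹ * (braidGen r k * h * (braidGen r k)⁻¹) *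
          (braidGen r k * braidGen r k) := by group
    rw [heq]
    exact Subgroup.mul_mem _ (Subgroup.mul_mem _ (Subgroup.inv_mem _ hsq) h2) hsq
  · rw [braidGen_of_le k (by omega)]
    simpa using hh

instance HH_normal : (HH r).Normal := by
  rw [← Subgroup.normalizer_eq_top_iff]
  rw [Subgroup.eq_top_iff']
  intro x
  refine PresentedGroup.generated_by _ _ (fun m => ?_) x
  rw [Subgroup.mem_normalizer_iff]
  intro h
  have hof : (PresentedGroup.of m : BraidGroup r) = braidGen r (m : ℕ) := by
    rw [braidGen, dif_pos m.isLt]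
  rw [hof]
  constructor
  · exact fun hh => conj_mem' (m : ℕ) hh
  · intro hh
    have := conj_inv_mem (m : ℕ) hh
    have heq : (braidGen r (m:ℕ))⁻¹ * (braidGen r (m:ℕ) * h * (braidGen r (m:ℕ))⁻¹) *
        braidGen r (m:ℕ) = h := by group
    rwa [heq] at this

universe u

section CoxCount

variable {G : Type u} [Group G] (n : ℕ) (q : ℕ → G)

/-- ascending product `q_a q_{a+1} ⋯ q_{n-1}` -/
def cc (a : ℕ) : G := ((List.range (n - a)).map fun m => q (a + m)).prod

lemma cc_of_le {a : ℕ} (h : n ≤ a) : cc n q a = 1 := by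
  unfold cc
  rw [show n - a = 0 by omega]
  simp

lemma cc_cons {a : ℕ} (h : a < n) : cc n q a = q a * cc n q (a + 1) := by
  unfold cc
  rw [show n - a = (n - (a + 1)) + 1 by omega, List.range_succ_eq_map]
  simp only [List.map_cons, List.map_map, List.prod_cons, Nat.add_zero]
  congr 1
  congr 1
  apply List.map_congr_left
  intro m _
  simp only [Function.comp_apply]
  congr 1
  omega

lemma cc_comm {k a : ℕ} (hcm : ∀ k m, k + 2 ≤ m → q k * q m = q m * q k)
    (h : k + 2 ≤ a) : Commute (q k) (cc n q a) := by
  apply Commute.list_prod_right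
  intro x hx
  obtain ⟨m, hm, rfl⟩ := List.mem_map.mp hx
  exact hcm k (a + m) (by omega)

lemma cc_step (hsq : ∀ k, q k * q k = 1)
    (hbr : ∀ k, k + 2 ≤ n → q k * q (k + 1) * q k = q (k + 1) * q k * q (k + 1))
    (hcm : ∀ k m, k + 2 ≤ m → q k * q m = q m * q k) :
    ∀ d a, a + 1 + d + 1 ≤ n → q (a + 1 + d) * cc n q a = cc n q a * q (a + d) := by
  intro d
  induction d with
  | zero =>
    intro a h
    simp only [Nat.add_zero]
    rw [cc_cons n q (by omega : a < n), cc_cons n q (by omega : a + 1 < n)]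
    have hc : Commute (q a) (cc n q (a + 1 + 1)) := cc_comm n q hcm (by omega)
    calc q (a + 1) * (q a * (q (a + 1) * cc n q (a + 1 + 1)))
        = (q (a + 1) * q a * q (a + 1)) * cc n q (a + 1 + 1) := by group
      _ = (q a * q (a + 1) * q a) * cc n q (a + 1 + 1) := by rw [(hbr a (by omega)).symm]
      _ = q a * q (a + 1) * (q a * cc n q (a + 1 + 1)) := by group
      _ = q a * q (a + 1) * (cc n q (a + 1 + 1) * q a) := by rw [hc.eq]
      _ = q a * (q (a + 1) * cc n q (a + 1 + 1)) * q a := by group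
  | succ d ih =>
    intro a h
    have hcma : q (a + 1 + (d + 1)) * q a = q a * q (a + 1 + (d + 1)) :=
      (hcm a (a + 1 + (d + 1)) (by omega)).symm
    rw [cc_cons n q (by omega : a < n)]
    calc q (a + 1 + (d + 1)) * (q a * cc n q (a + 1))
        = (q (a + 1 + (d + 1)) * q a) * cc n q (a + 1) := by group
      _ = q a * (q (a + 1 + (d + 1)) * cc n q (a + 1)) := by rw [hcma]; group
      _ = q a * (cc n q (a + 1) * q (a + 1 + d)) := by
          rw [show a + 1 + (d + 1) = (a + 1) + 1 + d by omega,
            ih (a + 1) (by omega)]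
      _ = q a * cc n q (a + 1) * q (a + (d + 1)) := by
          rw [show a + 1 + d = a + (d + 1) by omega]; group

end CoxCount

theorem cox_inj : ∀ (n : ℕ) {G : Type u} [Group G] (q : ℕ → G),
    (∀ k, n ≤ k + 1 → q k = 1) →
    (∀ k, q k * q k = 1) →
    (∀ k, k + 2 < n → q k * q (k + 1) * q k = q (k + 1) * q k * q (k + 1)) →
    (∀ k m, k + 2 ≤ m → q k * q m = q m * q k) →
    (∀ g : G, g ∈ Subgroup.closure (Set.range q)) →
    ∀ (f : G →* Equiv.Perm ℕ),
    (∀ k, k + 1 < n → f (q k) = Equiv.swap k (k + 1)) →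
    ∀ g : G, f g = 1 → g = 1 := by
  intro n
  induction n with
  | zero =>
    intro G _ q hout _ _ _ hgen f _ g _
    have hbot : g ∈ (⊥ : Subgroup G) := by
      have hle : Subgroup.closure (Set.range q) ≤ ⊥ := by
        refine (Subgroup.closure_le _).mpr ?_
        rintro x ⟨k, rfl⟩
        simp [hout k (by omega)]
      exact hle (hgen g)
    simpa using hbot
  | succ n ih =>
    intro G _ q hout hsq hbr hcm hgen f hf g hg
    by_cases hn : n = 0
    · subst hn
      have hbot : g ∈ (⊥ : Subgroup G) := by
        have hle : Subgroup.closure (Set.range q) ≤ ⊥ := by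
          refine (Subgroup.closure_le _).mpr ?_
          rintro x ⟨k, rfl⟩
          simp [hout k (by omega)]
        exact hle (hgen g)
      simpa using hbot
    -- n ≥ 1
    set q' : ℕ → G := fun k => if k + 1 < n then q k else 1 with hq'
    set U : Subgroup G := Subgroup.closure (Set.range q') with hU
    have hq'U : ∀ k, q' k ∈ U := fun k => Subgroup.subset_closure ⟨k, rfl⟩
    set qU : ℕ → U := fun k => ⟨q' k, hq'U k⟩ with hqU
    -- elements of U fix every point ≥ n under f
    have hU_fix : ∀ u : G, u ∈ U → ∀ m, n ≤ m → f u m = m := by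
      intro u hu
      induction hu using Subgroup.closure_induction with
      | mem x hx =>
        obtain ⟨k, rfl⟩ := hx
        intro m hm
        by_cases hk : k + 1 < n
        · rw [hq']
          simp only [if_pos hk]
          rw [hf k (by omega)]
          exact Equiv.swap_apply_of_ne_of_ne (by omega) (by omega)
        · rw [hq']
          simp only [if_neg hk, map_one]
          rfl
      | one => intro m _; simp
      | mul x y hx hy ihx ihy =>
        intro m hm
        rw [map_mul]
        simp only [Equiv.Perm.mul_apply]
        rw [ihy m hm, ihx m hm]
      | inv x hx ihx =>
        intro m hm
        rw [map_inv]
        exact (Equiv.symm_apply_eq _).mpr (ihx m hm).symm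
    -- the inductive hypothesis applied to U
    have ihU : ∀ u : U, f (U.subtype u) = 1 → u = 1 := by
      refine ih qU ?_ ?_ ?_ ?_ ?_ (f.comp U.subtype) ?_
      · intro k hk
        apply Subtype.ext
        simp only [hqU, hq']
        rw [if_neg (by omega)]
        rfl
      · intro k
        apply Subtype.ext
        simp only [hqU, hq', Subgroup.coe_mul]
        by_cases hk : k + 1 < n
        · rw [if_pos hk]; exact hsq k
        · rw [if_neg hk]; simp
      · intro k hk
        apply Subtype.ext
        simp only [hqU, hq', Subgroup.coe_mul]
        rw [if_pos (by omega), if_pos (by omega)]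
        exact hbr k (by omega)
      · intro k m hkm
        apply Subtype.ext
        simp only [hqU, hq', Subgroup.coe_mul]
        by_cases hk : k + 1 < n <;> by_cases hm : m + 1 < n <;>
          simp only [if_pos, if_neg, hk, hm, ite_true, ite_false, one_mul, mul_one]
        · exact hcm k m hkm
      · intro u
        have htop : Subgroup.closure (((↑) : U → G) ⁻¹' (Set.range q')) = ⊤ :=
          Subgroup.closure_closure_coe_preimage
        have hsub : (((↑) : U → G) ⁻¹' (Set.range q')) ⊆ Set.range qU := by
          rintro ⟨x, hx⟩ ⟨k, hk⟩
          exact ⟨k, Subtype.ext hk⟩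
        have := Subgroup.closure_mono hsub
        rw [htop] at this
        exact this (Subgroup.mem_top _)
      · intro k hk
        simp only [MonoidHom.comp_apply, hqU, hq']
        rw [Subgroup.coe_subtype]
        simp only [if_pos hk]
        exact hf k (by omega)
    -- decomposition g = c a * u
    have hdec : ∀ g : G, ∃ a u, a ≤ n ∧ u ∈ U ∧ g = cc n q a * u := by
      intro g
      have hstep : ∀ k y, (∃ a u, a ≤ n ∧ u ∈ U ∧ y = cc n q a * u) →
          (∃ a u, a ≤ n ∧ u ∈ U ∧ q k * y = cc n q a * u) := by
        rintro k y ⟨a, u, ha, hu, rfl⟩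
        rcases Nat.lt_or_ge k n with hkn | hkn
        · rcases Nat.lt_or_ge k a with hka | hka
          · rcases Nat.eq_or_lt_of_le (Nat.succ_le_of_lt hka) with hk1 | hk2
            · -- k + 1 = a
              refine ⟨k, u, by omega, hu, ?_⟩
              rw [cc_cons n q (by omega : k < n), show k + 1 = a from hk1]
              group
            · -- k + 2 ≤ a
              refine ⟨a, q k * u, ha, Subgroup.mul_mem _ ?_ hu, ?_⟩
              · have : q' k = q k := by rw [hq']; simp only [if_pos (show k + 1 < n by omega)]
                rw [← this]; exact hq'U k
              · have hc : Commute (q k) (cc n q a) := cc_comm n q hcm hk2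
                calc q k * (cc n q a * u) = (q k * cc n q a) * u := by group
                  _ = (cc n q a * q k) * u := by rw [hc.eq]
                  _ = cc n q a * (q k * u) := by group
          · rcases Nat.eq_or_lt_of_le hka with hk1 | hk2
            · -- k = a
              subst hk1
              refine ⟨a + 1, u, by omega, hu, ?_⟩
              rw [cc_cons n q hkn]
              calc q a * (q a * cc n q (a + 1) * u)
                  = (q a * q a) * cc n q (a + 1) * u := by group
                _ = cc n q (a + 1) * u := by rw [hsq a]; group
            · -- a + 1 ≤ k ≤ n - 1
              refine ⟨a, q (k - 1) * u, ha, Subgroup.mul_mem _ ?_ hu, ?_⟩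
              · have : q' (k - 1) = q (k - 1) := by
                  rw [hq']; simp only [if_pos (show k - 1 + 1 < n by omega)]
                rw [← this]; exact hq'U (k - 1)
              · have hx := cc_step n q hsq (fun k hk => hbr k (by omega)) hcm
                  (k - 1 - a) a (by omega)
                rw [show a + 1 + (k - 1 - a) = k by omega,
                  show a + (k - 1 - a) = k - 1 by omega] at hx
                calc q k * (cc n q a * u) = (q k * cc n q a) * u := by group
                  _ = (cc n q a * q (k - 1)) * u := by rw [hx]
                  _ = cc n q a * (q (k - 1) * u) := by group
        · -- k ≥ n : q k = 1
          refine ⟨a, u, ha, hu, ?_⟩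
          rw [hout k (by omega)]
          group
      induction hgen g using Subgroup.closure_induction_left with
      | one => exact ⟨n, 1, le_refl n, Subgroup.one_mem _, by rw [cc_of_le n q (le_refl n)]; group⟩
      | mul_left x hx y hy ihy =>
        obtain ⟨k, rfl⟩ := hx
        exact hstep k y ihy
      | inv_mul_cancel x hx y hy ihy =>
        obtain ⟨k, rfl⟩ := hx
        have hqinv : (q k)⁻¹ = q k := by
          rw [inv_eq_iff_mul_eq_one]; exact hsq k
        rw [hqinv]
        exact hstep k y ihy
    -- f (cc a) n = a
    have hfc : ∀ d a, a + d = n → f (cc n q a) n = a := by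
      intro d
      induction d with
      | zero =>
        intro a ha
        rw [cc_of_le n q (by omega)]
        simp
        omega
      | succ d ihd =>
        intro a ha
        rw [cc_cons n q (by omega : a < n), map_mul]
        simp only [Equiv.Perm.mul_apply]
        rw [ihd (a + 1) (by omega), hf a (by omega), Equiv.swap_apply_right]
    obtain ⟨a, u, ha, hu, rfl⟩ := hdec g
    have hfn : f (cc n q a * u) n = a := by
      rw [map_mul]
      simp only [Equiv.Perm.mul_apply]
      rw [hU_fix u hu n (le_refl n), hfc (n - a) a (by omega)]
    rw [hg] at hfn
    simp at hfn
    -- hfn : n = a   (or a = n)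
    have han : a = n := by omega
    rw [han, cc_of_le n q (le_refl n), one_mul] at hg ⊢
    have := ihU ⟨u, hu⟩ (by rwa [Subgroup.coe_subtype])
    exact congrArg Subtype.val this


lemma viaEmb_swap {N : ℕ} (x y : Fin N) :
    Equiv.Perm.viaEmbedding (Equiv.swap x y) Fin.valEmbedding = Equiv.swap (x : ℕ) (y : ℕ) := by
  ext m
  by_cases hm : m < N
  · have hrep : m = Fin.valEmbedding ⟨m, hm⟩ := rfl
    rw [hrep, Equiv.Perm.viaEmbedding_apply]
    simp only [Fin.valEmbedding_apply, Equiv.swap_apply_def, Fin.ext_iff,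
      apply_ite (Fin.val)]
  · rw [Equiv.Perm.viaEmbedding_apply_of_notMem]
    · rw [Equiv.swap_apply_of_ne_of_ne (by omega : m ≠ (x : ℕ)) (by omega : m ≠ (y : ℕ))]
    · rintro ⟨z, hz⟩
      rw [Fin.valEmbedding_apply] at hz
      omega

end PureBraidProof

open PureBraidProof

/-- Let `π : B_r → S_r` be the canonical surjection from the Artin braid group to the
symmetric group, i.e. any homomorphism sending each generator `Q_m` (0-indexed) to the
transposition `(m, m+1)` of `Fin r`.  Then `π` is surjective and its kernel (the pure braid
group) is generated by the elements `Q_{ij} = Q_{j-1} ⋯ Q_{i+1} Q_i² Q_{i+1}⁻¹ ⋯ Q_{j-1}⁻¹`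
for `i < j` (0-indexed, `j < r`). -/
theorem pureBraidGroup_generated_by_braidQ {r : ℕ} (hr : 2 ≤ r)
    (π : BraidGroup r →* Equiv.Perm (Fin r))
    (hπ : ∀ m : Fin (r - 1),
      π (PresentedGroup.of m) =
        Equiv.swap ⟨(m : ℕ), by have := m.isLt; omega⟩
          ⟨(m : ℕ) + 1, by have := m.isLt; omega⟩) :
    Function.Surjective π ∧
      π.ker = Subgroup.closure {w : BraidGroup r | ∃ i j : ℕ, i < j ∧ j < r ∧ w = braidQ r i j} := by
  have hπ' : ∀ k (hk : k < r - 1), π (braidGen r k) =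
      Equiv.swap ⟨k, by omega⟩ ⟨k + 1, by omega⟩ := by
    intro k hk
    rw [braidGen, dif_pos hk]
    exact hπ ⟨k, hk⟩
  -- all transpositions are in the range of π
  have hrange : ∀ d a b (ha : a < r) (hb : b < r), b = a + d + 1 →
      Equiv.swap (⟨a, ha⟩ : Fin r) ⟨b, hb⟩ ∈ π.range := by
    intro d
    induction d with
    | zero =>
      intro a b ha hb hab
      subst hab
      refine ⟨braidGen r a, ?_⟩
      rw [hπ' a (by omega)]
    | succ d ihd =>
      intro a b ha hb hab
      have hc : a + d + 1 < r := by omega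
      set σ := Equiv.swap (⟨a + d + 1, hc⟩ : Fin r) ⟨b, hb⟩ with hσdef
      have hσ : σ ∈ π.range := by
        refine ⟨braidGen r (a + d + 1), ?_⟩
        rw [hπ' (a + d + 1) (by omega), hσdef]
        congr 1
        exact Fin.ext (show a + d + 1 + 1 = b by omega)
      have hih : Equiv.swap (⟨a, ha⟩ : Fin r) ⟨a + d + 1, hc⟩ ∈ π.range :=
        ihd a (a + d + 1) ha hc rfl
      have hx : σ (⟨a, ha⟩ : Fin r) = ⟨a, ha⟩ :=
        Equiv.swap_apply_of_ne_of_ne (Fin.ne_of_val_ne (show a ≠ a + d + 1 by omega))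
          (Fin.ne_of_val_ne (show a ≠ b by omega))
      have hy : σ (⟨a + d + 1, hc⟩ : Fin r) = ⟨b, hb⟩ := Equiv.swap_apply_left _ _
      have key : Equiv.swap (⟨a, ha⟩ : Fin r) ⟨b, hb⟩ =
          σ * Equiv.swap ⟨a, ha⟩ ⟨a + d + 1, hc⟩ * σ⁻¹ := by
        calc Equiv.swap (⟨a, ha⟩ : Fin r) ⟨b, hb⟩
            = Equiv.swap (σ ⟨a, ha⟩) (σ ⟨a + d + 1, hc⟩) := by rw [hx, hy]
          _ = σ * Equiv.swap ⟨a, ha⟩ ⟨a + d + 1, hc⟩ * σ⁻¹ :=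
              Equiv.swap_apply_apply σ _ _
      rw [key]
      exact Subgroup.mul_mem _ (Subgroup.mul_mem _ hσ hih) (Subgroup.inv_mem _ hσ)
  have hsurj : Function.Surjective π := by
    rw [← MonoidHom.range_eq_top]
    rw [eq_top_iff, ← Equiv.Perm.closure_isSwap]
    refine (Subgroup.closure_le _).mpr ?_
    rintro σ ⟨x, y, hxy, rfl⟩
    rcases Nat.lt_or_ge (x : ℕ) (y : ℕ) with h | h
    · have := hrange ((y : ℕ) - (x : ℕ) - 1) (x : ℕ) (y : ℕ) x.isLt y.isLt (by omega)
      simpa [Fin.eta] using this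
    · have hyx : (y : ℕ) < (x : ℕ) := by
        rcases Nat.eq_or_lt_of_le h with h1 | h2
        · exact absurd (Fin.ext h1.symm) hxy
        · omega
      have := hrange ((x : ℕ) - (y : ℕ) - 1) (y : ℕ) (x : ℕ) y.isLt x.isLt (by omega)
      rw [Equiv.swap_comm]
      simpa [Fin.eta] using this
  refine ⟨hsurj, ?_⟩
  -- the closure is contained in the kernel
  have hker : Subgroup.closure (Sset r) ≤ π.ker := by
    refine (Subgroup.closure_le _).mpr ?_
    rintro x ⟨i, j, hij, hj, rfl⟩
    have hi : i < r - 1 := by omega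
    rw [SetLike.mem_coe, MonoidHom.mem_ker, braidQ_eq, map_mul, map_mul, map_mul, map_inv,
      hπ' i hi]
    rw [show π (dd r (i + 1) j) * Equiv.swap ⟨i, by omega⟩ ⟨i + 1, by omega⟩ *
        Equiv.swap ⟨i, by omega⟩ ⟨i + 1, by omega⟩ * (π (dd r (i + 1) j))⁻¹ =
        π (dd r (i + 1) j) * (Equiv.swap ⟨i, by omega⟩ ⟨i + 1, by omega⟩ *
        Equiv.swap ⟨i, by omega⟩ ⟨i + 1, by omega⟩) * (π (dd r (i + 1) j))⁻¹ by group]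
    rw [Equiv.swap_mul_self]
    group
  -- quotient by the closure
  have hQ : ∀ w : BraidGroup r, w ∈ π.ker → w ∈ HH r := by
    intro w hw
    set φ := QuotientGroup.mk' (HH r) with hφ
    have hHker : HH r ≤ π.ker := fun x hx => hker hx
    set πb := QuotientGroup.lift (HH r) π hHker with hπb
    set f := (Equiv.Perm.viaEmbeddingHom Fin.valEmbedding).comp πb with hf
    have hone : ∀ g : BraidGroup r ⧸ HH r, f g = 1 → g = 1 := by
      refine cox_inj r (fun k => φ (braidGen r k)) ?_ ?_ ?_ ?_ ?_ f ?_
      · intro k hk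
        show φ (braidGen r k) = 1
        rw [braidGen_of_le k (by omega), map_one]
      · intro k
        show φ (braidGen r k) * φ (braidGen r k) = 1
        rw [← map_mul]
        rw [QuotientGroup.mk'_apply, QuotientGroup.eq_one_iff]
        by_cases hk : k + 1 < r
        · exact sq_mem k hk
        · rw [braidGen_of_le k (by omega)]
          simpa using Subgroup.one_mem (HH r)
      · intro k hk
        show φ (braidGen r k) * φ (braidGen r (k + 1)) * φ (braidGen r k) =
          φ (braidGen r (k + 1)) * φ (braidGen r k) * φ (braidGen r (k + 1))
        rw [← map_mul, ← map_mul, ← map_mul, ← map_mul, braid_rel k (by omega)]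
      · intro k m hkm
        show φ (braidGen r k) * φ (braidGen r m) = φ (braidGen r m) * φ (braidGen r k)
        rw [← map_mul, ← map_mul, (braid_comm k m hkm).eq]
      · intro g
        obtain ⟨w', rfl⟩ := QuotientGroup.mk'_surjective (HH r) g
        have hw' : w' ∈ Subgroup.closure (Set.range (PresentedGroup.of :
            Fin (r - 1) → BraidGroup r)) := by
          rw [PresentedGroup.closure_range_of]
          exact Subgroup.mem_top w'
        have himg := Subgroup.mem_map_of_mem φ hw'
        rw [MonoidHom.map_closure] at himg
        refine Subgroup.closure_mono ?_ himg
        rintro x ⟨y, ⟨m, rfl⟩, rfl⟩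
        refine ⟨(m : ℕ), ?_⟩
        show φ (braidGen r (m : ℕ)) = φ (PresentedGroup.of m)
        rw [braidGen, dif_pos m.isLt]
      · intro k hk
        have hk' : k < r - 1 := by omega
        show f (φ (braidGen r k)) = Equiv.swap k (k + 1)
        rw [hf, MonoidHom.comp_apply, hπb, hφ, QuotientGroup.mk'_apply,
          QuotientGroup.lift_mk', hπ' k hk']
        rw [Equiv.Perm.viaEmbeddingHom_apply, viaEmb_swap]
    have hfw : f (φ w) = 1 := by
      rw [hf, MonoidHom.comp_apply, hπb, hφ, QuotientGroup.mk'_apply, QuotientGroup.lift_mk']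
      rw [MonoidHom.mem_ker] at hw
      rw [hw, map_one]
    have := hone (φ w) hfw
    rwa [hφ, QuotientGroup.mk'_apply, QuotientGroup.eq_one_iff] at this
  refine le_antisymm ?_ hker
  intro w hw
  exact hQ w hw
end
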